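/- For every m×m unitary matrix U and all polynomials p, q in m complex variables, ⟨U[p], U[q]⟩ = ⟨p,q⟩, where ⟨·,·⟩ is the Fock inner product. -/

import Mathlib

/-- The Fock inner product of two polynomials `p = ∑_S a_S x^S`, `q = ∑_S b_S x^S` in `m`
complex variables: `⟨p,q⟩ := ∑_S conj(a_S)·b_S·s₁!⋯s_m!`. -/
noncomputable def fock {m : ℕ} (p q : MvPolynomial (Fin m) ℂ) : ℂ :=
  ∑ S ∈ p.support ∪ q.support,
    (starRingEnd ℂ) (MvPolynomial.coeff S p) * MvPolynomial.coeff S q *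
      ∏ i, ((S i).factorial : ℂ)

/-- `L[p]`: the polynomial `p(Lx)`, obtained by substituting `x_i ↦ ∑_j L_{ij} x_j` in `p`. -/
noncomputable def substL {m : ℕ} (L : Matrix (Fin m) (Fin m) ℂ)
    (p : MvPolynomial (Fin m) ℂ) : MvPolynomial (Fin m) ℂ :=
  MvPolynomial.aeval (fun i => ∑ j, MvPolynomial.C (L i j) * MvPolynomial.X j) p

namespace FockAux

open MvPolynomial

variable {m : ℕ}

noncomputable def term (p q : MvPolynomial (Fin m) ℂ) (S : Fin m →₀ ℕ) : ℂ :=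
  (starRingEnd ℂ) (MvPolynomial.coeff S p) * MvPolynomial.coeff S q *
      ∏ i, ((S i).factorial : ℂ)

lemma fock_def (p q : MvPolynomial (Fin m) ℂ) :
    fock p q = ∑ S ∈ p.support ∪ q.support, term p q S := rfl

lemma fock_eq_sum {p q : MvPolynomial (Fin m) ℂ} {A : Finset (Fin m →₀ ℕ)}
    (hp : p.support ⊆ A) (hq : q.support ⊆ A) :
    fock p q = ∑ S ∈ A, term p q S := by
  rw [fock_def]
  refine Finset.sum_subset (Finset.union_subset hp hq) (fun S _ hS => ?_)
  have : MvPolynomial.coeff S p = 0 := by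
    by_contra h
    exact hS (Finset.mem_union_left _ (MvPolynomial.mem_support_iff.mpr h))
  simp [term, this]

lemma fock_zero_left (q : MvPolynomial (Fin m) ℂ) : fock 0 q = 0 := by
  rw [fock_def]
  refine Finset.sum_eq_zero fun S _ => ?_
  simp [term]

lemma fock_zero_right (p : MvPolynomial (Fin m) ℂ) : fock p 0 = 0 := by
  rw [fock_def]
  refine Finset.sum_eq_zero fun S _ => ?_
  simp [term]

lemma fock_add_left (p₁ p₂ q : MvPolynomial (Fin m) ℂ) :
    fock (p₁ + p₂) q = fock p₁ q + fock p₂ q := by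
  classical
  set A := p₁.support ∪ p₂.support ∪ (p₁ + p₂).support ∪ q.support with hA
  have h1 : fock (p₁ + p₂) q = ∑ S ∈ A, term (p₁ + p₂) q S :=
    fock_eq_sum (by intro x hx; simp only [hA, Finset.mem_union]; tauto) (by intro x hx; simp only [hA, Finset.mem_union]; tauto)
  have h2 : fock p₁ q = ∑ S ∈ A, term p₁ q S :=
    fock_eq_sum (by intro x hx; simp only [hA, Finset.mem_union]; tauto) (by intro x hx; simp only [hA, Finset.mem_union]; tauto)
  have h3 : fock p₂ q = ∑ S ∈ A, term p₂ q S :=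
    fock_eq_sum (by intro x hx; simp only [hA, Finset.mem_union]; tauto) (by intro x hx; simp only [hA, Finset.mem_union]; tauto)
  rw [h1, h2, h3, ← Finset.sum_add_distrib]
  refine Finset.sum_congr rfl fun S _ => ?_
  simp only [term, MvPolynomial.coeff_add, map_add]
  ring

lemma fock_add_right (p q₁ q₂ : MvPolynomial (Fin m) ℂ) :
    fock p (q₁ + q₂) = fock p q₁ + fock p q₂ := by
  classical
  set A := q₁.support ∪ q₂.support ∪ (q₁ + q₂).support ∪ p.support with hA
  have h1 : fock p (q₁ + q₂) = ∑ S ∈ A, term p (q₁ + q₂) S :=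
    fock_eq_sum (by intro x hx; simp only [hA, Finset.mem_union]; tauto) (by intro x hx; simp only [hA, Finset.mem_union]; tauto)
  have h2 : fock p q₁ = ∑ S ∈ A, term p q₁ S :=
    fock_eq_sum (by intro x hx; simp only [hA, Finset.mem_union]; tauto) (by intro x hx; simp only [hA, Finset.mem_union]; tauto)
  have h3 : fock p q₂ = ∑ S ∈ A, term p q₂ S :=
    fock_eq_sum (by intro x hx; simp only [hA, Finset.mem_union]; tauto) (by intro x hx; simp only [hA, Finset.mem_union]; tauto)
  rw [h1, h2, h3, ← Finset.sum_add_distrib]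
  refine Finset.sum_congr rfl fun S _ => ?_
  simp only [term, MvPolynomial.coeff_add]
  ring

lemma fock_C_mul_left (c : ℂ) (p q : MvPolynomial (Fin m) ℂ) :
    fock (MvPolynomial.C c * p) q = (starRingEnd ℂ) c * fock p q := by
  classical
  have hs : (MvPolynomial.C c * p).support ⊆ p.support := by
    rw [← MvPolynomial.smul_eq_C_mul]
    exact MvPolynomial.support_smul
  have h1 : fock (MvPolynomial.C c * p) q = ∑ S ∈ p.support ∪ q.support,
      term (MvPolynomial.C c * p) q S :=
    fock_eq_sum (hs.trans Finset.subset_union_left) Finset.subset_union_right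
  rw [h1, fock_def, Finset.mul_sum]
  refine Finset.sum_congr rfl fun S _ => ?_
  simp only [term, MvPolynomial.coeff_C_mul, map_mul]
  ring

lemma fock_C_mul_right (c : ℂ) (p q : MvPolynomial (Fin m) ℂ) :
    fock p (MvPolynomial.C c * q) = c * fock p q := by
  classical
  have hs : (MvPolynomial.C c * q).support ⊆ q.support := by
    rw [← MvPolynomial.smul_eq_C_mul]
    exact MvPolynomial.support_smul
  have h1 : fock p (MvPolynomial.C c * q) = ∑ S ∈ p.support ∪ q.support,
      term p (MvPolynomial.C c * q) S :=
    fock_eq_sum Finset.subset_union_left (hs.trans Finset.subset_union_right)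
  rw [h1, fock_def, Finset.mul_sum]
  refine Finset.sum_congr rfl fun S _ => ?_
  simp only [term, MvPolynomial.coeff_C_mul]
  ring

lemma fock_sum_left {ι : Type*} (A : Finset ι) (f : ι → MvPolynomial (Fin m) ℂ)
    (q : MvPolynomial (Fin m) ℂ) :
    fock (∑ i ∈ A, f i) q = ∑ i ∈ A, fock (f i) q := by
  classical
  induction A using Finset.induction_on with
  | empty => simp [fock_zero_left]
  | insert _ _ h ih => simp [Finset.sum_insert h, fock_add_left, ih]

lemma fock_sum_right {ι : Type*} (A : Finset ι) (f : ι → MvPolynomial (Fin m) ℂ)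
    (p : MvPolynomial (Fin m) ℂ) :
    fock p (∑ i ∈ A, f i) = ∑ i ∈ A, fock p (f i) := by
  classical
  induction A using Finset.induction_on with
  | empty => simp [fock_zero_right]
  | insert _ _ h ih => simp [Finset.sum_insert h, fock_add_right, ih]


lemma fock_monomial (S T : Fin m →₀ ℕ) (a b : ℂ) :
    fock (monomial S a) (monomial T b) =
      if S = T then (starRingEnd ℂ) a * b * ∏ i, ((S i).factorial : ℂ) else 0 := by
  classical
  have hS : (monomial S a).support ⊆ insert S {T} := by
    refine (support_monomial_subset).trans ?_
    intro x hx; simp_all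
  have hT : (monomial T b).support ⊆ insert S {T} := by
    refine (support_monomial_subset).trans ?_
    intro x hx; simp_all
  rw [fock_eq_sum hS hT]
  rcases eq_or_ne S T with rfl | h
  · rw [Finset.insert_eq_self.mpr (Finset.mem_singleton_self S), Finset.sum_singleton]
    simp [term, coeff_monomial]
  · rw [Finset.sum_pair h]
    simp [term, coeff_monomial, h, Ne.symm h]

lemma prod_factorial_succ (S : Fin m →₀ ℕ) (j : Fin m) :
    ∏ i, (((Finsupp.single j 1 + S : Fin m →₀ ℕ) i).factorial : ℂ) =
      ((S j : ℂ) + 1) * ∏ i, ((S i).factorial : ℂ) := by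
  rw [← Finset.mul_prod_erase Finset.univ _ (Finset.mem_univ j),
      ← Finset.mul_prod_erase Finset.univ (fun i => ((S i).factorial : ℂ)) (Finset.mem_univ j)]
  have h1 : ∏ i ∈ Finset.univ.erase j, (((Finsupp.single j 1 + S : Fin m →₀ ℕ) i).factorial : ℂ) =
      ∏ i ∈ Finset.univ.erase j, ((S i).factorial : ℂ) := by
    refine Finset.prod_congr rfl fun i hi => ?_
    have : i ≠ j := (Finset.mem_erase.mp hi).1
    simp [Finsupp.single_apply, Ne.symm this]
  rw [h1]
  have h2 : (Finsupp.single j 1 + S : Fin m →₀ ℕ) j = S j + 1 := by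
    simp [Finsupp.single_apply]; omega
  rw [h2, Nat.factorial_succ]
  push_cast
  ring

lemma add_sub_single (T : Fin m →₀ ℕ) (j : Fin m) (h : T j ≠ 0) :
    Finsupp.single j 1 + (T - Finsupp.single j 1) = T := by
  ext k
  rcases eq_or_ne j k with rfl | hk
  · simp [Finsupp.single_apply, Finsupp.tsub_apply]; omega
  · simp [Finsupp.single_apply, Finsupp.tsub_apply, hk]

lemma fock_X_mul_monomial (j : Fin m) (S T : Fin m →₀ ℕ) (a b : ℂ) :
    fock (X j * monomial S a) (monomial T b) =
      fock (monomial S a) (pderiv j (monomial T b)) := by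
  classical
  rw [X, monomial_mul, one_mul, pderiv_monomial, fock_monomial, fock_monomial]
  by_cases hc : Finsupp.single j 1 + S = T
  · have hTj : T j = S j + 1 := by
      rw [← hc]; simp [Finsupp.single_apply]; omega
    have hc2 : S = T - Finsupp.single j 1 := by
      rw [← hc, add_tsub_cancel_left]
    rw [if_pos hc, if_pos hc2, ← hc, prod_factorial_succ]
    have h3 : (Finsupp.single j 1 + S : Fin m →₀ ℕ) j = S j + 1 := by
      simp [Finsupp.single_apply]; omega
    rw [h3]
    push_cast
    ring
  · by_cases hc2 : S = T - Finsupp.single j 1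
    · have hTj : T j = 0 := by
        by_contra hT0
        exact hc (by rw [hc2]; exact add_sub_single T j hT0)
      rw [if_neg hc, if_pos hc2, hTj]
      push_cast
      ring
    · rw [if_neg hc, if_neg hc2]

lemma fock_X_mul (j : Fin m) (r s : MvPolynomial (Fin m) ℂ) :
    fock (X j * r) s = fock r (pderiv j s) := by
  induction r using MvPolynomial.induction_on' with
  | monomial S a =>
    induction s using MvPolynomial.induction_on' with
    | monomial T b => exact fock_X_mul_monomial j S T a b
    | add s₁ s₂ h₁ h₂ => rw [map_add, fock_add_right, fock_add_right, h₁, h₂]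
  | add r₁ r₂ h₁ h₂ => rw [mul_add, fock_add_left, fock_add_left, h₁, h₂]



variable (U : Matrix (Fin m) (Fin m) ℂ)

lemma substL_C (a : ℂ) : substL U (C a) = C a := by simp [substL]
lemma substL_add (p q) : substL U (p + q) = substL U p + substL U q := map_add _ _ _
lemma substL_mul (p q) : substL U (p * q) = substL U p * substL U q := map_mul _ _ _
lemma substL_X (i : Fin m) : substL U (X i) = ∑ j, C (U i j) * X j := by simp [substL]

lemma pderiv_substL_X (i j : Fin m) :
    pderiv j (substL U (X i)) = C (U i j) := by
  classical
  rw [substL_X, map_sum]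
  rw [Finset.sum_eq_single j]
  · simp
  · intro l _ hl
    simp [pderiv_C_mul, pderiv_X_of_ne hl]
  · simp

lemma pderiv_substL (j : Fin m) (q : MvPolynomial (Fin m) ℂ) :
    pderiv j (substL U q) = ∑ k, C (U k j) * substL U (pderiv k q) := by
  classical
  induction q using MvPolynomial.induction_on with
  | C a => simp [substL, pderiv_C]
  | add p q hp hq =>
    rw [substL_add, map_add, hp, hq, ← Finset.sum_add_distrib]
    refine Finset.sum_congr rfl fun k _ => ?_
    rw [map_add, substL_add, mul_add]
  | mul_X p i hp =>
    have key : ∀ k : Fin m, substL U (pderiv k (p * X i)) =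
        substL U (pderiv k p) * substL U (X i) +
          substL U p * substL U (pderiv k (X i)) := by
      intro k
      rw [pderiv_mul, substL_add, substL_mul, substL_mul]
    rw [substL_mul, pderiv_mul, hp, pderiv_substL_X]
    have hr : ∑ k, C (U k j) * substL U (pderiv k (p * X i)) =
        (∑ k, C (U k j) * (substL U (pderiv k p) * substL U (X i))) +
          ∑ k, C (U k j) * (substL U p * substL U (pderiv k (X i))) := by
      rw [← Finset.sum_add_distrib]
      refine Finset.sum_congr rfl fun k _ => ?_
      rw [key k, mul_add]
    rw [hr]
    congr 1
    · rw [Finset.sum_mul]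
      refine Finset.sum_congr rfl fun k _ => by ring
    · classical
      rw [Finset.sum_eq_single i]
      · rw [pderiv_X_self]
        have h1 : substL U (1 : MvPolynomial (Fin m) ℂ) = 1 := by simp [substL]
        rw [h1, mul_one]; ring
      · intro k _ hk
        rw [pderiv_X_of_ne (Ne.symm hk)]
        have h0 : substL U (0 : MvPolynomial (Fin m) ℂ) = 0 := by simp [substL]
        rw [h0, mul_zero, mul_zero]
      · simp


lemma substL_sum {ι : Type*} (A : Finset ι) (f : ι → MvPolynomial (Fin m) ℂ) :
    substL U (∑ i ∈ A, f i) = ∑ i ∈ A, substL U (f i) := map_sum _ _ _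

lemma constantCoeff_substL (q : MvPolynomial (Fin m) ℂ) :
    constantCoeff (substL U q) = constantCoeff q := by
  induction q using MvPolynomial.induction_on with
  | C a => simp [substL]
  | add p q hp hq => rw [substL_add, map_add, map_add, hp, hq]
  | mul_X p i hp =>
    rw [substL_mul, substL_X, map_mul, map_mul, hp, map_sum]
    simp

lemma fock_one_left (s : MvPolynomial (Fin m) ℂ) :
    fock 1 s = constantCoeff s := by
  classical
  have h1 : (1 : MvPolynomial (Fin m) ℂ).support ⊆ insert 0 s.support := by
    rw [← C_1, C_apply]
    exact support_monomial_subset.trans (by intro x hx; simp_all)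
  rw [fock_eq_sum h1 (Finset.subset_insert _ _)]
  rw [Finset.sum_eq_single_of_mem 0 (Finset.mem_insert_self _ _)]
  · simp [term, coeff_one]
    rfl
  · intro b _ hb
    simp [term, coeff_one, Ne.symm hb]

lemma ortho (hU : U ∈ Matrix.unitaryGroup (Fin m) ℂ) (i k : Fin m) :
    ∑ j, U k j * (starRingEnd ℂ) (U i j) = if k = i then 1 else 0 := by
  have h : U * star U = 1 := (Matrix.mem_unitaryGroup_iff).mp hU
  have h2 : (U * star U) k i = (1 : Matrix (Fin m) (Fin m) ℂ) k i := by rw [h]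
  rw [Matrix.mul_apply, Matrix.one_apply] at h2
  simpa [Matrix.star_eq_conjTranspose, Matrix.conjTranspose_apply] using h2

lemma main (hU : U ∈ Matrix.unitaryGroup (Fin m) ℂ) (n : ℕ) :
    ∀ S : Fin m →₀ ℕ, (∑ i, S i) = n →
      ∀ q, fock (substL U (monomial S 1)) (substL U q) = fock (monomial S 1) q := by
  classical
  induction n with
  | zero =>
    intro S hS q
    have hS0 : S = 0 := by
      ext i
      have := Finset.sum_eq_zero_iff.mp hS i (Finset.mem_univ i)
      simpa using this
    subst hS0
    rw [monomial_zero', C_1]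
    have h1 : substL U (1 : MvPolynomial (Fin m) ℂ) = 1 := by simp [substL]
    rw [h1, fock_one_left, fock_one_left, constantCoeff_substL]
  | succ n ih =>
    intro S hS q
    have hex : ∃ i, S i ≠ 0 := by
      by_contra h
      push_neg at h
      simp [h] at hS
    obtain ⟨i, hi⟩ := hex
    set S' := S - Finsupp.single i 1 with hS'
    have hSS : Finsupp.single i 1 + S' = S := add_sub_single S i hi
    have hdeg : (∑ k, S' k) = n := by
      have h1 : (∑ k, S k) = (∑ k, (Finsupp.single i 1 : Fin m →₀ ℕ) k) + ∑ k, S' k := by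
        rw [← hSS, ← Finset.sum_add_distrib]
        rfl
      have h2 : (∑ k, (Finsupp.single i 1 : Fin m →₀ ℕ) k) = 1 := by
        simp [Finsupp.single_apply]
      omega
    have hmon : monomial S (1:ℂ) = X i * monomial S' 1 := by
      rw [X, monomial_mul, one_mul, hSS]
    set F : Fin m → ℂ := fun k => fock (substL U (monomial S' 1)) (substL U (pderiv k q))
      with hF
    have step : ∀ j, fock (C (U i j) * X j * substL U (monomial S' 1)) (substL U q)
        = (starRingEnd ℂ) (U i j) * ∑ k, U k j * F k := by
      intro j
      rw [mul_assoc, fock_C_mul_left, fock_X_mul, pderiv_substL, fock_sum_right]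
      congr 1
      exact Finset.sum_congr rfl fun k _ => fock_C_mul_right _ _ _
    calc fock (substL U (monomial S 1)) (substL U q)
        = ∑ j, fock (C (U i j) * X j * substL U (monomial S' 1)) (substL U q) := by
          rw [hmon, substL_mul, substL_X, Finset.sum_mul, fock_sum_left]
      _ = ∑ j, (starRingEnd ℂ) (U i j) * ∑ k, U k j * F k :=
          Finset.sum_congr rfl fun j _ => step j
      _ = ∑ k, (∑ j, U k j * (starRingEnd ℂ) (U i j)) * F k := by
          have hswap : ∀ j, (starRingEnd ℂ) (U i j) * ∑ k, U k j * F k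
              = ∑ k, U k j * (starRingEnd ℂ) (U i j) * F k := by
            intro j
            rw [Finset.mul_sum]
            exact Finset.sum_congr rfl fun k _ => by ring
          rw [Finset.sum_congr rfl fun j _ => hswap j, Finset.sum_comm]
          refine Finset.sum_congr rfl fun k _ => ?_
          rw [Finset.sum_mul]
      _ = F i := by
          rw [Finset.sum_eq_single i]
          · rw [ortho U hU i i, if_pos rfl, one_mul]
          · intro k _ hk
            rw [ortho U hU i k, if_neg hk, zero_mul]
          · simp
      _ = fock (monomial S' 1) (pderiv i q) := ih S' hdeg (pderiv i q)
      _ = fock (X i * monomial S' 1) q := (fock_X_mul i _ q).symm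
      _ = fock (monomial S 1) q := by rw [← hmon]

end FockAux

/-- **Unitary invariance of the Fock inner product.**
`⟨U[p], U[q]⟩ = ⟨p,q⟩` for every `m×m` unitary `U` and all polynomials `p, q`. -/
theorem fock_unitary_invariant (m : ℕ) (U : Matrix (Fin m) (Fin m) ℂ)
    (hU : U ∈ Matrix.unitaryGroup (Fin m) ℂ) (p q : MvPolynomial (Fin m) ℂ) :
    fock (substL U p) (substL U q) = fock p q := by
  open FockAux MvPolynomial in
  calc fock (substL U p) (substL U q)
      = ∑ S ∈ p.support, fock (substL U (monomial S (coeff S p))) (substL U q) := by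
        conv_lhs => rw [← support_sum_monomial_coeff p]
        rw [substL_sum, fock_sum_left]
    _ = ∑ S ∈ p.support, fock (monomial S (coeff S p)) q := by
        refine Finset.sum_congr rfl fun S _ => ?_
        have hm : monomial S (coeff S p) = C (coeff S p) * monomial S (1:ℂ) := by
          rw [C_mul_monomial, mul_one]
        rw [hm, substL_mul, substL_C, fock_C_mul_left, fock_C_mul_left,
          main U hU (∑ i, S i) S rfl q]
    _ = fock p q := by
        rw [← fock_sum_left]
        congr 1
        exact support_sum_monomial_coeff p
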